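/- Let m > 0. Suppose V : (0, ∞) → (0, ∞) is differentiable with V′(s) > 0 for all s > 0, satisfies V(s)·(1 + V(s)² − V′(s)²) = 2m for all s > 0 (i.e., every slice {s} × S² of the warped product metric ds² + V(s)²g₀ has Hawking mass m), and V(s) → r₀(m) as s → 0⁺. Then V(s) = r_m(s) for all s > 0; that is, the metric is the Schwarzschild anti-de Sitter metric of mass m. -/

import Mathlib

open MeasureTheory

/-- The arclength function `s_m(r) = ∫_{r₀}^{r} (1 + t² − 2m/t)^{−1/2} dt`, the
`g_m`-distance from the coordinate sphere `S_r` to the boundary sphere `S_{r₀}` in the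
Schwarzschild anti-de Sitter space of mass `m`. -/
noncomputable def sm (m r₀ r : ℝ) : ℝ :=
  ∫ t in Set.Ioc r₀ r, (Real.sqrt (1 + t ^ 2 - 2 * m / t))⁻¹

/-- Let `m > 0`.  Suppose `V : (0,∞) → (0,∞)` is differentiable with
`V′(s) > 0` for all `s > 0`, satisfies `V(s)·(1 + V(s)² − V′(s)²) = 2m` for all `s > 0`
(i.e. every slice `{s} × S²` of the warped product metric `ds² + V(s)²g₀` has Hawking
mass `m`), and `V(s) → r₀(m)` as `s → 0⁺`.  Then `V(s) = r_m(s)` for all `s > 0`; that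
is, the metric is the Schwarzschild anti-de Sitter metric of mass `m`.  Here `r₀` is
the unique positive real with `r₀³ + r₀ = 2m` and `r_m` is the inverse of the arclength
function `s_m`, expressed by the hypotheses `hinv₁`, `hinv₂`. -/
theorem penrose_stmt13 (m r₀ : ℝ) (hm : 0 < m) (hr₀ : 0 < r₀)
    (hroot : r₀ ^ 3 + r₀ = 2 * m) (rm : ℝ → ℝ)
    (hinv₁ : ∀ r : ℝ, r₀ ≤ r → rm (sm m r₀ r) = r)
    (hinv₂ : ∀ s : ℝ, 0 ≤ s → r₀ ≤ rm s ∧ sm m r₀ (rm s) = s)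
    (V : ℝ → ℝ)
    (hVpos : ∀ s : ℝ, 0 < s → 0 < V s)
    (hVdiff : ∀ s : ℝ, 0 < s → DifferentiableAt ℝ V s)
    (hV'pos : ∀ s : ℝ, 0 < s → 0 < deriv V s)
    (hmass : ∀ s : ℝ, 0 < s → V s * (1 + (V s) ^ 2 - (deriv V s) ^ 2) = 2 * m)
    (hlim : Filter.Tendsto V (nhdsWithin 0 (Set.Ioi 0)) (nhds r₀)) :
    ∀ s : ℝ, 0 < s → V s = rm s := by
  set h : ℝ → ℝ := fun t => (Real.sqrt (1 + t ^ 2 - 2 * m / t))⁻¹ with hh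
  have hmeas : Measurable h :=
    Measurable.inv (Real.continuous_sqrt.measurable.comp
      ((measurable_const.add (measurable_id.pow_const 2)).sub
        (measurable_const.div measurable_id)))
  -- integrability on Ioc r₀ b
  have hint : ∀ b : ℝ, IntegrableOn h (Set.Ioc r₀ b) := by
    intro b
    have hbint : IntegrableOn (fun t : ℝ => (Real.sqrt r₀)⁻¹ * (t - r₀) ^ (-(1/2) : ℝ))
        (Set.Ioc r₀ b) := by
      have h1 : IntervalIntegrable (fun x : ℝ => x ^ (-(1/2) : ℝ)) volume 0 (b - r₀) :=
        intervalIntegral.intervalIntegrable_rpow' (by norm_num)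
      have h2 : IntervalIntegrable (fun x : ℝ => (x - r₀) ^ (-(1/2) : ℝ)) volume r₀ b := by
        simpa using h1.comp_sub_right r₀
      rcases le_or_gt r₀ b with hle | hlt
      · have := (h2.const_mul ((Real.sqrt r₀)⁻¹)).1
        simpa [Set.uIoc_of_le hle] using this
      · simp [Set.Ioc_eq_empty (not_lt.mpr hlt.le)]
    refine hbint.mono' (hmeas.aestronglyMeasurable.restrict) ?_
    rw [ae_restrict_iff' measurableSet_Ioc]
    filter_upwards with t ht
    have htr : r₀ < t := ht.1
    have htpos : (0:ℝ) < t := lt_trans hr₀ htr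
    have hft : r₀ * (t - r₀) ≤ 1 + t ^ 2 - 2 * m / t := by
      have key : 1 + t ^ 2 - 2 * m / t = (t - r₀) * (t ^ 2 + t * r₀ + r₀ ^ 2 + 1) / t := by
        field_simp
        nlinarith [hroot]
      rw [key, le_div_iff₀ htpos]
      nlinarith [sq_nonneg t, sq_nonneg r₀, mul_pos hr₀ (by linarith : (0:ℝ) < t - r₀)]
    have hpos : 0 < r₀ * (t - r₀) := mul_pos hr₀ (by linarith)
    have hsqpos : 0 < Real.sqrt (r₀ * (t - r₀)) := Real.sqrt_pos.mpr hpos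
    have hle : h t ≤ (Real.sqrt (r₀ * (t - r₀)))⁻¹ :=
      inv_anti₀ hsqpos (Real.sqrt_le_sqrt hft)
    have heq : (Real.sqrt (r₀ * (t - r₀)))⁻¹ = (Real.sqrt r₀)⁻¹ * (t - r₀) ^ (-(1/2) : ℝ) := by
      rw [Real.sqrt_mul hr₀.le, mul_inv, Real.sqrt_eq_rpow (t - r₀),
        ← Real.rpow_neg (by linarith : (0:ℝ) ≤ t - r₀)]
    rw [Real.norm_eq_abs, abs_of_nonneg (by positivity)]
    calc h t ≤ (Real.sqrt (r₀ * (t - r₀)))⁻¹ := hle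
      _ = _ := heq
  -- V s > r₀ for s > 0
  have hVgt : ∀ s : ℝ, 0 < s → r₀ < V s := by
    intro s hs
    have hmass' := hmass s hs
    have hV := hVpos s hs
    have hV' := hV'pos s hs
    by_contra hcon
    push_neg at hcon
    have h1 : V s ^ 3 ≤ r₀ ^ 3 := pow_le_pow_left₀ hV.le hcon 3
    nlinarith [mul_pos hV (mul_pos hV' hV')]
  -- f (V s) = (deriv V s)^2, and positivity of f on (r₀, ∞)
  have hfV : ∀ s : ℝ, 0 < s → 1 + (V s) ^ 2 - 2 * m / V s = (deriv V s) ^ 2 := by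
    intro s hs
    have hV := hVpos s hs
    have hmass' := hmass s hs
    field_simp
    nlinarith [hmass']
  -- the derivative of sm ∘ V is 1
  have hderiv : ∀ s : ℝ, 0 < s → HasDerivAt (fun u => sm m r₀ (V u)) 1 s := by
    intro s hs
    have hVs := hVpos s hs
    have hVgt' := hVgt s hs
    have hV' := hV'pos s hs
    have hfpos : 0 < 1 + (V s) ^ 2 - 2 * m / V s := by
      rw [hfV s hs]; positivity
    -- FTC at a := V s
    have hii : IntervalIntegrable h volume r₀ (V s) :=
      (intervalIntegrable_iff_integrableOn_Ioc_of_le hVgt'.le).mpr (hint (V s))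
    have hcontAt : ContinuousAt h (V s) := by
      apply ContinuousAt.inv₀
      · exact (Real.continuous_sqrt.continuousAt).comp
          ((continuousAt_const.add ((continuousAt_id).pow 2)).sub
            (continuousAt_const.div continuousAt_id (ne_of_gt hVs)))
      · exact ne_of_gt (Real.sqrt_pos.mpr hfpos)
    have hsmf : StronglyMeasurableAtFilter h (nhds (V s)) :=
      ⟨Set.univ, Filter.univ_mem, hmeas.aestronglyMeasurable.restrict⟩
    have hftc : HasDerivAt (fun r => ∫ t in r₀..r, h t) (h (V s)) (V s) :=
      intervalIntegral.integral_hasDerivAt_right hii hsmf hcontAt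
    have hcomp : HasDerivAt (fun u => ∫ t in r₀..(V u), h t) (h (V s) * deriv V s) s :=
      hftc.comp s ((hVdiff s hs).hasDerivAt)
    have hval : h (V s) * deriv V s = 1 := by
      have : h (V s) = (deriv V s)⁻¹ := by
        rw [hh]
        simp only
        rw [hfV s hs, Real.sqrt_sq hV'.le]
      rw [this, inv_mul_cancel₀ (ne_of_gt hV')]
    rw [hval] at hcomp
    -- transfer to sm
    refine hcomp.congr_of_eventuallyEq ?_
    have hVcont : ContinuousAt V s := (hVdiff s hs).continuousAt
    have hev : ∀ᶠ u in nhds s, r₀ < V u :=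
      ContinuousAt.eventually_lt continuousAt_const hVcont hVgt'
    filter_upwards [hev] with u hu
    rw [sm, intervalIntegral.integral_of_le hu.le]
  -- sm m r₀ (V ·) - id is constant on Ioi 0
  set g : ℝ → ℝ := fun u => sm m r₀ (V u) - u with hg
  have hgderiv : ∀ s ∈ Set.Ioi (0:ℝ), HasDerivAt g 0 s := by
    intro s hs
    have := (hderiv s hs).sub (hasDerivAt_id s)
    rw [sub_self] at this
    exact this
  have hconst : ∀ s ∈ Set.Ioi (0:ℝ), ∀ s' ∈ Set.Ioi (0:ℝ), g s = g s' := by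
    intro s hs s' hs'
    refine (convex_Ioi (0:ℝ)).is_const_of_fderivWithin_eq_zero
      (fun x hx => ((hgderiv x hx).differentiableAt).differentiableWithinAt) ?_ hs hs'
    intro x hx
    rw [fderivWithin_of_isOpen isOpen_Ioi hx]
    have : deriv g x = 0 := (hgderiv x hx).deriv
    ext
    simp [this]
  -- limit of sm m r₀ (V u) as u → 0⁺ is 0
  have hlim0 : Filter.Tendsto (fun u => sm m r₀ (V u)) (nhdsWithin 0 (Set.Ioi 0)) (nhds 0) := by
    set b : ℝ := r₀ + 1 with hb
    have hIcc : IntegrableOn h (Set.Icc r₀ b) := by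
      rw [integrableOn_Icc_iff_integrableOn_Ioc]
      exact hint b
    have hcontOn := intervalIntegral.continuousOn_primitive (f := h) (μ := volume) hIcc
    have hcw : ContinuousWithinAt (fun x => ∫ t in Set.Ioc r₀ x, h t) (Set.Icc r₀ b) r₀ :=
      hcontOn r₀ (Set.left_mem_Icc.mpr (by linarith))
    have hval0 : (∫ t in Set.Ioc r₀ r₀, h t) = 0 := by simp
    have hVtend : Filter.Tendsto V (nhdsWithin 0 (Set.Ioi 0))
        (nhdsWithin r₀ (Set.Icc r₀ b)) := by
      rw [tendsto_nhdsWithin_iff]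
      refine ⟨hlim, ?_⟩
      have h1 : ∀ᶠ u in nhdsWithin 0 (Set.Ioi 0), V u < b :=
        hlim.eventually_lt_const (by linarith)
      have h2 : ∀ᶠ u in nhdsWithin 0 (Set.Ioi 0), u ∈ Set.Ioi (0:ℝ) :=
        eventually_mem_nhdsWithin
      filter_upwards [h1, h2] with u hu1 hu2
      exact ⟨(hVgt u hu2).le, hu1.le⟩
    have := (hcw.tendsto).comp hVtend
    rw [hval0] at this
    exact this
  -- conclude g = 0 on Ioi 0
  intro s hs
  have hgs0 : g s = 0 := by
    have htendg : Filter.Tendsto g (nhdsWithin 0 (Set.Ioi 0)) (nhds (g s)) := by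
      have : ∀ᶠ u in nhdsWithin 0 (Set.Ioi 0), g u = g s := by
        filter_upwards [eventually_mem_nhdsWithin] with u hu
        exact hconst u hu s hs
      exact Filter.Tendsto.congr' (Filter.EventuallyEq.symm this) tendsto_const_nhds
    have htend0 : Filter.Tendsto g (nhdsWithin 0 (Set.Ioi 0)) (nhds 0) := by
      have hid : Filter.Tendsto (fun u : ℝ => u) (nhdsWithin 0 (Set.Ioi 0)) (nhds 0) :=
        Filter.tendsto_id.mono_left nhdsWithin_le_nhds
      simpa using hlim0.sub hid
    exact tendsto_nhds_unique htendg htend0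
  have hsmVs : sm m r₀ (V s) = s := by
    have : sm m r₀ (V s) - s = 0 := hgs0
    linarith
  have := hinv₁ (V s) (hVgt s hs).le
  rw [hsmVs] at this
  exact this.symm
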